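/- Let A, B ⊆ S_n be disjoint with |A| = |B| and M_A = M_B, and let U, V be symmetric entrywise-nonnegative |A|×|A| matrices with [[U,−V],[−Vᵀ,U]] positive semidefinite and tr(U·M_A) ≠ 0 (a witness of size n with value ν = tr(V·M_{A,B})/tr(U·M_A)). Let A' = A≀A = {π≀σ : π,σ ∈ A} and B' = B≀B ⊆ S_{n²}, and let U' = U⊗U and V' = V⊗V (Kronecker products). Then A', B' are disjoint with |A'| = |B'| and M_{A'} = M_{B'}, U', V' are symmetric entrywise-nonnegative, the block matrix [[U',−V'],[−V'ᵀ,U']] is positive semidefinite, tr(U'·M_{A'}) ≠ 0, and tr(V'·M_{A',B'}) / tr(U'·M_{A'}) = ν² (in particular the new witness has size n² and value ≥ ν²). -/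

import Mathlib

open scoped Classical Kronecker
open Finset Matrix

noncomputable section

def oneLine {n : ℕ} (π : Equiv.Perm (Fin n)) : List (Fin n) :=
  (List.finRange n).map π

def lcs {n : ℕ} (π σ : Equiv.Perm (Fin n)) : ℕ :=
  sSup {k | ∃ l : List (Fin n), l.Sublist (oneLine π) ∧ l.Sublist (oneLine σ) ∧ l.length = k}

def ulamSim {n : ℕ} (π σ : Equiv.Perm (Fin n)) : ℝ := (lcs π σ : ℝ) / n

/-- The wreath product `π ≀ σ ∈ S_{n²}`: under the identification
`finProdFinEquiv : Fin n × Fin n ≃ Fin (n * n)`, `(i, j) ↦ j + n * i` (i.e. block `i`,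
position `j`), it sends `i * n + j ↦ π(i) * n + σ(j)`. -/
def wreath {n : ℕ} (π σ : Equiv.Perm (Fin n)) : Equiv.Perm (Fin (n * n)) :=
  finProdFinEquiv.symm.trans ((Equiv.prodCongr π σ).trans finProdFinEquiv)

namespace WitnessAmp

variable {n : ℕ}

lemma sorted_sublist_finRange {m : List (Fin n)} (h : m.Pairwise (· < ·)) :
    m.Sublist (List.finRange n) := by
  refine List.sublist_of_subperm_of_pairwise ?_ (h.imp le_of_lt)
    ((List.pairwise_lt_finRange n).imp le_of_lt)
  have hnd : m.Nodup := h.imp ne_of_lt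
  exact hnd.subperm (fun x _ => List.mem_finRange x)

lemma sublist_oneLine_iff {π : Equiv.Perm (Fin n)} {l : List (Fin n)} :
    l.Sublist (oneLine π) ↔ l.Pairwise (fun u v => π.symm u < π.symm v) := by
  constructor
  · intro h
    have hp : (oneLine π).Pairwise (fun u v => π.symm u < π.symm v) := by
      rw [oneLine, List.pairwise_map]
      simpa using List.pairwise_lt_finRange n
    exact hp.sublist h
  · intro h
    have h2 : (l.map π.symm).Sublist (List.finRange n) :=
      sorted_sublist_finRange (by rwa [List.pairwise_map])
    have h3 := h2.map π
    simpa [oneLine, List.map_map, Function.comp] using h3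

def CRel (π σ : Equiv.Perm (Fin n)) (u v : Fin n) : Prop :=
  π.symm u < π.symm v ∧ σ.symm u < σ.symm v

lemma common_iff {π σ : Equiv.Perm (Fin n)} {l : List (Fin n)} :
    (l.Sublist (oneLine π) ∧ l.Sublist (oneLine σ)) ↔ l.Pairwise (CRel π σ) := by
  rw [sublist_oneLine_iff, sublist_oneLine_iff, ← List.pairwise_and_iff]
  rfl

lemma lcs_set_nonempty (π σ : Equiv.Perm (Fin n)) :
    {k | ∃ l : List (Fin n), l.Sublist (oneLine π) ∧ l.Sublist (oneLine σ) ∧ l.length = k}.Nonempty :=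
  ⟨0, [], List.nil_sublist _, List.nil_sublist _, rfl⟩

lemma lcs_bdd (π σ : Equiv.Perm (Fin n)) :
    BddAbove {k | ∃ l : List (Fin n), l.Sublist (oneLine π) ∧ l.Sublist (oneLine σ) ∧ l.length = k} := by
  refine ⟨n, ?_⟩
  rintro k ⟨l, h1, _, rfl⟩
  have := h1.length_le
  simpa [oneLine] using this

lemma length_le_lcs {π σ : Equiv.Perm (Fin n)} {l : List (Fin n)}
    (h : l.Pairwise (CRel π σ)) : l.length ≤ lcs π σ := by
  have h' := common_iff.mpr h
  exact le_csSup (lcs_bdd π σ) ⟨l, h'.1, h'.2, rfl⟩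

lemma exists_lcs (π σ : Equiv.Perm (Fin n)) :
    ∃ l : List (Fin n), l.Pairwise (CRel π σ) ∧ l.length = lcs π σ := by
  have h := Nat.sSup_mem (lcs_set_nonempty π σ) (lcs_bdd π σ)
  obtain ⟨l, h1, h2, h3⟩ := h
  exact ⟨l, common_iff.mp ⟨h1, h2⟩, h3⟩

lemma lcs_le {π σ : Equiv.Perm (Fin n)} {m : ℕ}
    (h : ∀ l : List (Fin n), l.Pairwise (CRel π σ) → l.length ≤ m) : lcs π σ ≤ m := by
  refine csSup_le (lcs_set_nonempty π σ) ?_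
  rintro k ⟨l, h1, h2, rfl⟩
  exact h l (common_iff.mp ⟨h1, h2⟩)

def oF {n : ℕ} (u : Fin (n * n)) : Fin n := (finProdFinEquiv.symm u).1
def iF {n : ℕ} (u : Fin (n * n)) : Fin n := (finProdFinEquiv.symm u).2

lemma oF_e (i j : Fin n) : oF (finProdFinEquiv (i, j)) = i := by
  simp [oF]

lemma iF_e (i j : Fin n) : iF (finProdFinEquiv (i, j)) = j := by
  simp [iF]

lemma e_lt_iff (i j i' j' : Fin n) :
    finProdFinEquiv (i, j) < finProdFinEquiv (i', j') ↔
      (i < i' ∨ (i = i' ∧ j < j')) := by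
  have hj := j.isLt
  have hj' := j'.isLt
  simp only [Fin.lt_def, finProdFinEquiv_apply_val]
  constructor
  · intro h
    rcases lt_trichotomy i.val i'.val with hi | hi | hi
    · exact Or.inl hi
    · refine Or.inr ⟨Fin.ext hi, ?_⟩
      rw [hi] at h
      exact Nat.lt_of_add_lt_add_right h
    · exfalso
      have h1 : (i'.val + 1) ≤ i.val := hi
      nlinarith
  · rintro (hi | ⟨hi, hjj⟩)
    · have h1 : (i.val + 1) ≤ i'.val := hi
      nlinarith
    · subst hi
      exact Nat.add_lt_add_right hjj _

lemma wreath_symm_apply (π σ : Equiv.Perm (Fin n)) (u : Fin (n * n)) :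
    (wreath π σ).symm u = finProdFinEquiv (π.symm (oF u), σ.symm (iF u)) := rfl

lemma crel_wreath_iff (π σ π' σ' : Equiv.Perm (Fin n)) (u v : Fin (n * n)) :
    CRel (wreath π σ) (wreath π' σ') u v ↔
      ((oF u ≠ oF v ∧ CRel π π' (oF u) (oF v)) ∨
        (oF u = oF v ∧ CRel σ σ' (iF u) (iF v))) := by
  unfold CRel
  rw [wreath_symm_apply, wreath_symm_apply, wreath_symm_apply, wreath_symm_apply,
    e_lt_iff, e_lt_iff]
  constructor
  · rintro ⟨hA | ⟨heA, hsA⟩, hB | ⟨heB, hsB⟩⟩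
    · refine Or.inl ⟨?_, hA, hB⟩
      intro he
      rw [he] at hA
      exact lt_irrefl _ hA
    · have : oF u = oF v := π'.symm.injective heB
      rw [this] at hA
      exact absurd hA (lt_irrefl _)
    · have : oF u = oF v := π.symm.injective heA
      rw [this] at hB
      exact absurd hB (lt_irrefl _)
    · exact Or.inr ⟨π.symm.injective heA, hsA, hsB⟩
  · rintro (⟨hne, h1, h2⟩ | ⟨heq, h1, h2⟩)
    · exact ⟨Or.inl h1, Or.inl h2⟩
    · exact ⟨Or.inr ⟨congrArg _ heq, h1⟩, Or.inr ⟨congrArg _ heq, h2⟩⟩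

lemma crel_trans {π σ : Equiv.Perm (Fin n)} {u v w : Fin n}
    (h1 : CRel π σ u v) (h2 : CRel π σ v w) : CRel π σ u w :=
  ⟨lt_trans h1.1 h2.1, lt_trans h1.2 h2.2⟩

lemma key {π σ π' σ' : Equiv.Perm (Fin n)} :
    ∀ (N : ℕ) (L : List (Fin (n * n))), L.length ≤ N →
      L.Pairwise (CRel (wreath π σ) (wreath π' σ')) →
      ∃ c : List (Fin n), c.Pairwise (CRel π π') ∧ L.length ≤ lcs σ σ' * c.length ∧
        ∀ hL : L ≠ [], ∃ hc : c ≠ [], c.head hc = oF (L.head hL) := by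
  intro N
  induction N with
  | zero =>
    intro L hN _
    have hL0 : L = [] := List.length_eq_zero_iff.mp (Nat.le_zero.mp hN)
    subst hL0
    exact ⟨[], List.Pairwise.nil, by simp, fun h => absurd rfl h⟩
  | succ N IH =>
    intro L hN hL
    cases L with
    | nil => exact ⟨[], List.Pairwise.nil, by simp, fun h => absurd rfl h⟩
    | cons x t =>
      set p : Fin (n * n) → Bool := fun y => decide (oF y = oF x) with hp
      set B := (x :: t).takeWhile p with hB
      set rest := (x :: t).dropWhile p with hrest
      have hsplit : B ++ rest = x :: t := List.takeWhile_append_dropWhile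
      have hxB : B = x :: t.takeWhile p := by
        rw [hB, List.takeWhile_cons_of_pos]
        simp [hp]
      have hBpos : 0 < B.length := by rw [hxB]; simp
      have hlen_eq : B.length + rest.length = t.length + 1 := by
        have h1 := congrArg List.length hsplit
        simpa using h1
      have hBmem : ∀ y ∈ B, oF y = oF x := by
        intro y hy
        have := List.mem_takeWhile_imp (hB ▸ hy)
        simpa [hp] using this
      have hpfalse : ∀ (w : rest ≠ []), p (rest.head w) = false := fun w =>
        List.head_dropWhile_not p w
      have hxmem : x ∈ B := by rw [hxB]; exact List.mem_cons_self
      have hLsplit : (B ++ rest).Pairwise (CRel (wreath π σ) (wreath π' σ')) := by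
        rw [hsplit]; exact hL
      have hpairs : ∀ u ∈ B, ∀ v ∈ rest, CRel (wreath π σ) (wreath π' σ') u v :=
        (List.pairwise_append.mp hLsplit).2.2
      have hBpair : B.Pairwise (CRel (wreath π σ) (wreath π' σ')) :=
        (List.pairwise_append.mp hLsplit).1
      have hrestpair : rest.Pairwise (CRel (wreath π σ) (wreath π' σ')) :=
        (List.pairwise_append.mp hLsplit).2.1
      have hBinner : (B.map iF).Pairwise (CRel σ σ') := by
        rw [List.pairwise_map]
        refine hBpair.imp_of_mem ?_
        intro u v hu hv huv
        rcases (crel_wreath_iff π σ π' σ' u v).mp huv with ⟨hne, _⟩ | ⟨_, h⟩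
        · exact absurd (by rw [hBmem u hu, hBmem v hv]) hne
        · exact h
      have hBle : B.length ≤ lcs σ σ' := by
        have := length_le_lcs hBinner
        simpa using this
      have hrlen : rest.length ≤ N := by
        have h2 : (x :: t).length ≤ N + 1 := hN
        simp only [List.length_cons] at h2
        omega
      obtain ⟨c, hcpair, hclen, hchead⟩ := IH rest hrlen hrestpair
      have hgoal : (x :: t).length = B.length + rest.length := by
        simp only [List.length_cons]; omega
      clear_value B rest
      clear hB hrest hL hLsplit hN hrestpair
      cases rest with
      | nil =>
        refine ⟨[oF x], by simp, ?_, fun _ => ⟨by simp, by simp⟩⟩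
        have h3 : (x :: t).length ≤ lcs σ σ' := by
          simp only [List.length_nil] at hgoal
          omega
        simpa using h3
      | cons r s =>
        have hrne : (r :: s : List (Fin (n * n))) ≠ [] := by simp
        obtain ⟨hcne, hchead'⟩ := hchead hrne
        have hxr : CRel (wreath π σ) (wreath π' σ') x r :=
          hpairs x hxmem r List.mem_cons_self
        have hr_not : oF r ≠ oF x := by
          have h1 := hpfalse hrne
          simpa [hp] using h1
        have hror : CRel π π' (oF x) (oF r) := by
          rcases (crel_wreath_iff π σ π' σ' x r).mp hxr with ⟨_, h⟩ | ⟨heq, _⟩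
          · exact h
          · exact absurd heq.symm hr_not
        cases c with
        | nil => exact absurd rfl hcne
        | cons ch ct =>
          have hch : ch = oF r := by simpa using hchead'
          refine ⟨oF x :: ch :: ct, ?_, ?_, fun _ => ⟨by simp, by simp⟩⟩
          · rw [List.pairwise_cons]
            refine ⟨?_, hcpair⟩
            intro y hy
            rcases List.mem_cons.mp hy with rfl | hy'
            · rw [hch]; exact hror
            · have h1 : CRel π π' ch y := (List.pairwise_cons.mp hcpair).1 y hy'
              exact crel_trans (hch ▸ hror) h1
          · calc (x :: t).length = B.length + (r :: s).length := hgoal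
              _ ≤ lcs σ σ' + lcs σ σ' * (ch :: ct).length := Nat.add_le_add hBle hclen
              _ = lcs σ σ' * ((ch :: ct).length + 1) := by ring
              _ = lcs σ σ' * (oF x :: ch :: ct).length := by simp

lemma length_flatMap_map {α β γ : Type*} (lo : List α) (li : List β) (g : α → β → γ) :
    (lo.flatMap fun I => li.map (g I)).length = lo.length * li.length := by
  induction lo with
  | nil => simp
  | cons I lo ih => simp [ih, Nat.succ_mul, Nat.add_comm]

lemma lcs_wreath (π σ π' σ' : Equiv.Perm (Fin n)) :
    lcs (wreath π σ) (wreath π' σ') = lcs π π' * lcs σ σ' := by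
  apply le_antisymm
  · apply lcs_le
    intro L hL
    obtain ⟨c, hc, hlen, _⟩ := key L.length L le_rfl hL
    calc L.length ≤ lcs σ σ' * c.length := hlen
      _ ≤ lcs σ σ' * lcs π π' := Nat.mul_le_mul_left _ (length_le_lcs hc)
      _ = lcs π π' * lcs σ σ' := Nat.mul_comm _ _
  · obtain ⟨lo, hlo, hlo'⟩ := exists_lcs π π'
    obtain ⟨li, hli, hli'⟩ := exists_lcs σ σ'
    set L := lo.flatMap (fun I => li.map (fun j => finProdFinEquiv (I, j))) with hLdef
    have hp : L.Pairwise (CRel (wreath π σ) (wreath π' σ')) := by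
      rw [hLdef, List.pairwise_flatMap]
      constructor
      · intro I _
        rw [List.pairwise_map]
        refine hli.imp ?_
        intro j j' hj
        rw [crel_wreath_iff]
        right
        rw [oF_e, oF_e, iF_e, iF_e]
        exact ⟨rfl, hj⟩
      · refine hlo.imp ?_
        intro I I' hII x hx y hy
        obtain ⟨j, _, rfl⟩ := List.mem_map.mp hx
        obtain ⟨j', _, rfl⟩ := List.mem_map.mp hy
        rw [crel_wreath_iff]
        left
        rw [oF_e, oF_e]
        exact ⟨fun he => absurd (he ▸ hII.1) (lt_irrefl _), hII⟩
    have hlen : L.length = lo.length * li.length := by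
      rw [hLdef]
      exact length_flatMap_map lo li (fun I j => finProdFinEquiv (I, j))
    calc lcs π π' * lcs σ σ' = L.length := by rw [hlen, hlo', hli']
      _ ≤ lcs (wreath π σ) (wreath π' σ') := length_le_lcs hp

lemma ulamSim_wreath (π σ π' σ' : Equiv.Perm (Fin n)) :
    ulamSim (wreath π σ) (wreath π' σ') = ulamSim π π' * ulamSim σ σ' := by
  unfold ulamSim
  rw [lcs_wreath]
  push_cast
  rw [div_mul_div_comm]

lemma wreath_inj (hn : n ≠ 0) {π σ π' σ' : Equiv.Perm (Fin n)}
    (h : wreath π σ = wreath π' σ') : π = π' ∧ σ = σ' := by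
  have hn' : 0 < n := Nat.pos_of_ne_zero hn
  have hkey : ∀ i j : Fin n, (π i, σ j) = (π' i, σ' j) := by
    intro i j
    have h1 : wreath π σ (finProdFinEquiv (i, j)) = wreath π' σ' (finProdFinEquiv (i, j)) := by
      rw [h]
    simp only [wreath, Equiv.trans_apply, Equiv.symm_apply_apply, Equiv.prodCongr_apply,
      Prod.map] at h1
    exact finProdFinEquiv.injective h1
  exact ⟨Equiv.ext fun i => congrArg Prod.fst (hkey i ⟨0, hn'⟩),
    Equiv.ext fun j => congrArg Prod.snd (hkey ⟨0, hn'⟩ j)⟩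

end WitnessAmp

/-- Amplification of a witness by the wreath product: from a witness of size `n` and value
`ν` one obtains a witness of size `n²` and value `ν²`. The sets `A, B ⊆ S_n` are encoded
as injective families `a b : ι → S_n` with disjoint ranges; `A' = A ≀ A` and `B' = B ≀ B`
are indexed by `ι × ι` (outer permutation first), matching the Kronecker index order. -/
theorem witness_amplification {n : ℕ} (ι : Type) [Fintype ι]
    (a b : ι → Equiv.Perm (Fin n))
    (ha : Function.Injective a) (hb : Function.Injective b)
    (hdisj : ∀ i j : ι, a i ≠ b j)
    (hMAeqMB : ∀ i j, ulamSim (a i) (a j) = ulamSim (b i) (b j))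
    (U V : Matrix ι ι ℝ)
    (hUsymm : U.IsSymm) (hVsymm : V.IsSymm)
    (hUnonneg : ∀ i j, 0 ≤ U i j) (hVnonneg : ∀ i j, 0 ≤ V i j)
    (hW : (Matrix.fromBlocks U (-V) (-Vᵀ) U).PosSemidef)
    (MA MAB : Matrix ι ι ℝ)
    (hMA : ∀ i j, MA i j = ulamSim (a i) (a j))
    (hMAB : ∀ i j, MAB i j = ulamSim (a i) (b j))
    (htr : Matrix.trace (U * MA) ≠ 0)
    (a' b' : ι × ι → Equiv.Perm (Fin (n * n)))
    (ha' : ∀ p : ι × ι, a' p = wreath (a p.1) (a p.2))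
    (hb' : ∀ p : ι × ι, b' p = wreath (b p.1) (b p.2))
    (MA' MAB' : Matrix (ι × ι) (ι × ι) ℝ)
    (hMA' : ∀ p q, MA' p q = ulamSim (a' p) (a' q))
    (hMAB' : ∀ p q, MAB' p q = ulamSim (a' p) (b' q)) :
    Function.Injective a' ∧ Function.Injective b' ∧
      (∀ p q : ι × ι, a' p ≠ b' q) ∧
      (∀ p q : ι × ι, ulamSim (a' p) (a' q) = ulamSim (b' p) (b' q)) ∧
      (U ⊗ₖ U).IsSymm ∧ (V ⊗ₖ V).IsSymm ∧
      (∀ p q : ι × ι, 0 ≤ (U ⊗ₖ U) p q) ∧ (∀ p q : ι × ι, 0 ≤ (V ⊗ₖ V) p q) ∧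
      (Matrix.fromBlocks (U ⊗ₖ U) (-(V ⊗ₖ V)) (-(V ⊗ₖ V)ᵀ) (U ⊗ₖ U)).PosSemidef ∧
      Matrix.trace ((U ⊗ₖ U) * MA') ≠ 0 ∧
      Matrix.trace ((V ⊗ₖ V) * MAB') / Matrix.trace ((U ⊗ₖ U) * MA') =
        (Matrix.trace (V * MAB) / Matrix.trace (U * MA)) ^ 2 := by
  classical
  have hperm0 : n = 0 → ∀ π τ : Equiv.Perm (Fin n), π = τ := by
    intro h0 π τ
    exact Equiv.ext fun x => absurd x.2 (by omega)
  have hι : ι → n ≠ 0 := fun i h0 => hdisj i i (hperm0 h0 _ _)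
  have hainj : Function.Injective a' := by
    intro p q hpq
    rw [ha' p, ha' q] at hpq
    obtain ⟨h1, h2⟩ := WitnessAmp.wreath_inj (hι p.1) hpq
    exact Prod.ext (ha h1) (ha h2)
  have hbinj : Function.Injective b' := by
    intro p q hpq
    rw [hb' p, hb' q] at hpq
    obtain ⟨h1, h2⟩ := WitnessAmp.wreath_inj (hι p.1) hpq
    exact Prod.ext (hb h1) (hb h2)
  have hdisj' : ∀ p q : ι × ι, a' p ≠ b' q := by
    intro p q h
    rw [ha' p, hb' q] at h
    exact hdisj p.1 q.1 (WitnessAmp.wreath_inj (hι p.1) h).1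
  have hsim : ∀ p q : ι × ι, ulamSim (a' p) (a' q) = ulamSim (b' p) (b' q) := by
    intro p q
    rw [ha', ha', hb', hb', WitnessAmp.ulamSim_wreath, WitnessAmp.ulamSim_wreath,
      hMAeqMB, hMAeqMB]
  have hMA'k : MA' = MA ⊗ₖ MA := by
    ext p q
    rw [hMA' p q, ha', ha', WitnessAmp.ulamSim_wreath]
    simp only [Matrix.kroneckerMap_apply]
    rw [hMA, hMA]
  have hMAB'k : MAB' = MAB ⊗ₖ MAB := by
    ext p q
    rw [hMAB' p q, ha', hb', WitnessAmp.ulamSim_wreath]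
    simp only [Matrix.kroneckerMap_apply]
    rw [hMAB, hMAB]
  have htrU : Matrix.trace ((U ⊗ₖ U) * MA') = Matrix.trace (U * MA) * Matrix.trace (U * MA) := by
    rw [hMA'k, ← Matrix.mul_kronecker_mul, Matrix.trace_kronecker]
  have htrV : Matrix.trace ((V ⊗ₖ V) * MAB')
      = Matrix.trace (V * MAB) * Matrix.trace (V * MAB) := by
    rw [hMAB'k, ← Matrix.mul_kronecker_mul, Matrix.trace_kronecker]
  have hUsym' : (U ⊗ₖ U).IsSymm := by
    show (U ⊗ₖ U)ᵀ = U ⊗ₖ U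
    rw [← Matrix.kroneckerMap_transpose, show Uᵀ = U from hUsymm]
  have hVsym' : (V ⊗ₖ V).IsSymm := by
    show (V ⊗ₖ V)ᵀ = V ⊗ₖ V
    rw [← Matrix.kroneckerMap_transpose, show Vᵀ = V from hVsymm]
  -- positive semidefiniteness
  set P := Matrix.fromBlocks U (-V) (-Vᵀ) U with hPdef
  have hPP : (P ⊗ₖ P).PosSemidef := by
    exact hW.kronecker hW
  set f : (ι × ι) ⊕ (ι × ι) → (ι ⊕ ι) × (ι ⊕ ι) :=
    Sum.elim (fun p => (Sum.inl p.1, Sum.inl p.2)) (fun p => (Sum.inr p.1, Sum.inr p.2))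
    with hfdef
  have hsub : ((P ⊗ₖ P).submatrix f f).PosSemidef := hPP.submatrix f
  have hSeq : (P ⊗ₖ P).submatrix f f
      = Matrix.fromBlocks (U ⊗ₖ U) (V ⊗ₖ V) ((V ⊗ₖ V)ᵀ) (U ⊗ₖ U) := by
    ext x y
    rcases x with p | p <;> rcases y with q | q <;>
      simp [hfdef, hPdef, Matrix.submatrix_apply, Matrix.kroneckerMap_apply,
        Matrix.fromBlocks_apply₁₁, Matrix.fromBlocks_apply₁₂, Matrix.fromBlocks_apply₂₁,
        Matrix.fromBlocks_apply₂₂, Matrix.transpose_apply, Matrix.neg_apply, neg_mul_neg]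
  rw [hSeq] at hsub
  set D : Matrix ((ι × ι) ⊕ (ι × ι)) ((ι × ι) ⊕ (ι × ι)) ℝ := Matrix.fromBlocks 1 0 0 (-1)
    with hDdef
  have hfinal := hsub.mul_mul_conjTranspose_same D
  have hDeq : D * (Matrix.fromBlocks (U ⊗ₖ U) (V ⊗ₖ V) ((V ⊗ₖ V)ᵀ) (U ⊗ₖ U)) * Dᴴ
      = Matrix.fromBlocks (U ⊗ₖ U) (-(V ⊗ₖ V)) (-(V ⊗ₖ V)ᵀ) (U ⊗ₖ U) := by
    rw [hDdef]
    have hDH : (Matrix.fromBlocks (1 : Matrix (ι × ι) (ι × ι) ℝ) 0 0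
        (-1 : Matrix (ι × ι) (ι × ι) ℝ))ᴴ = Matrix.fromBlocks 1 0 0 (-1) := by
      simp [Matrix.fromBlocks_conjTranspose, Matrix.fromBlocks_transpose]
    rw [hDH, Matrix.fromBlocks_multiply, Matrix.fromBlocks_multiply]
    simp [Matrix.mul_neg, Matrix.neg_mul]
  have hPSD : (Matrix.fromBlocks (U ⊗ₖ U) (-(V ⊗ₖ V)) (-(V ⊗ₖ V)ᵀ) (U ⊗ₖ U)).PosSemidef :=
    hDeq ▸ hfinal
  refine ⟨hainj, hbinj, hdisj', hsim, hUsym', hVsym',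
    fun p q => mul_nonneg (hUnonneg _ _) (hUnonneg _ _),
    fun p q => mul_nonneg (hVnonneg _ _) (hVnonneg _ _), hPSD, ?_, ?_⟩
  · rw [htrU]
    exact mul_ne_zero htr htr
  · rw [htrV, htrU, div_pow, pow_two, pow_two]
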